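/- Let k ≥ 2 and let ℓ, m be positive integers with ℓ ≤ m. Then there exists a code C ⊆ [k]^m with |C| ≥ k^m / (C(m,ℓ)²·k^{m−ℓ}) such that every two distinct codewords of C have longest common subsequence of length less than ℓ. (Greedy construction at the core of the proof of Theorem 2.4 of the paper: strings can be chosen iteratively, each new string having LCS less than ℓ with all previously chosen strings.) -/

import Mathlib

/-- `s` (of length `ℓ`) is a subsequence of `t` (of length `m`): there are indices
`i₁ < ⋯ < i_ℓ` with `t (i_j) = s j` for all `j`. -/
def IsSubseq {α : Type*} {ℓ m : ℕ} (s : Fin ℓ → α) (t : Fin m → α) : Prop :=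
  ∃ f : Fin ℓ → Fin m, StrictMono f ∧ ∀ j, t (f j) = s j

open Finset in
/-- Reconstruction map: from a pair of index sets and values outside the second set,
build a candidate string. -/
noncomputable def greedyPhi (k ℓ m : ℕ) (hk : 0 < k) (u : Fin m → Fin k)
    (p : Finset (Fin m) × Finset (Fin m) × (Fin (m - ℓ) → Fin k)) : Fin m → Fin k :=
  if h : p.1.card = ℓ ∧ p.2.1.card = ℓ then
    fun i =>
      if hi : i ∈ p.2.1 then
        u (p.1.orderEmbOfFin h.1 ((p.2.1.orderIsoOfFin h.2).symm ⟨i, hi⟩))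
      else
        p.2.2 ((p.2.1ᶜ.orderIsoOfFin
          (by simp [Finset.card_compl, h.2])).symm ⟨i, Finset.mem_compl.2 hi⟩)
  else fun _ => ⟨0, hk⟩

open Finset in
/-- Any set of strings each sharing a common `ℓ`-subsequence with `u` has size at most
`C(m,ℓ) * (C(m,ℓ) * k^(m-ℓ))`. -/
lemma greedy_ball_bound (k ℓ m : ℕ) (hk : 0 < k) (u : Fin m → Fin k)
    (S : Finset (Fin m → Fin k))
    (hS : ∀ v ∈ S, ∃ s : Fin ℓ → Fin k, IsSubseq s u ∧ IsSubseq s v) :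
    S.card ≤ m.choose ℓ * (m.choose ℓ * k ^ (m - ℓ)) := by
  classical
  have hsub : S ⊆ Finset.image (greedyPhi k ℓ m hk u)
      ((Finset.univ.powersetCard ℓ) ×ˢ (Finset.univ.powersetCard ℓ) ×ˢ Finset.univ) := by
    intro v hv
    obtain ⟨s, ⟨f, hf, hfu⟩, ⟨g, hg, hgv⟩⟩ := hS v hv
    set A₁ : Finset (Fin m) := Finset.univ.image f with hA₁
    set A₂ : Finset (Fin m) := Finset.univ.image g with hA₂
    have h1 : A₁.card = ℓ := by
      rw [hA₁, Finset.card_image_of_injective _ hf.injective, Finset.card_univ,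
        Fintype.card_fin]
    have h2 : A₂.card = ℓ := by
      rw [hA₂, Finset.card_image_of_injective _ hg.injective, Finset.card_univ,
        Fintype.card_fin]
    have hc : A₂ᶜ.card = m - ℓ := by simp [Finset.card_compl, h2]
    have hfeq : f = A₁.orderEmbOfFin h1 :=
      Finset.orderEmbOfFin_unique h1 (fun x => Finset.mem_image_of_mem f (mem_univ x)) hf
    have hgeq : g = A₂.orderEmbOfFin h2 :=
      Finset.orderEmbOfFin_unique h2 (fun x => Finset.mem_image_of_mem g (mem_univ x)) hg
    refine Finset.mem_image.2 ⟨⟨A₁, A₂, fun j => v (A₂ᶜ.orderEmbOfFin hc j)⟩, ?_, ?_⟩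
    · simp [Finset.mem_powersetCard, h1, h2]
    · funext i
      rw [greedyPhi, dif_pos ⟨h1, h2⟩]
      by_cases hi : i ∈ A₂
      · rw [dif_pos hi]
        set j : Fin ℓ := (A₂.orderIsoOfFin h2).symm ⟨i, hi⟩ with hj
        have hgj : g j = i := by
          rw [hgeq]
          have := (A₂.orderIsoOfFin h2).apply_symm_apply ⟨i, hi⟩
          calc A₂.orderEmbOfFin h2 j = ↑(A₂.orderIsoOfFin h2 j) :=
                (Finset.coe_orderIsoOfFin_apply A₂ h2 j).symm
            _ = i := by rw [hj, this]
        have : u (A₁.orderEmbOfFin h1 j) = v (g j) := by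
          rw [← hfeq, hfu j, hgv j]
        rw [this, hgj]
      · rw [dif_neg hi]
        set x : (A₂ᶜ : Finset (Fin m)) := ⟨i, Finset.mem_compl.2 hi⟩ with hx
        set j : Fin (m - ℓ) := (A₂ᶜ.orderIsoOfFin hc).symm x with hj
        have : A₂ᶜ.orderEmbOfFin hc j = i := by
          have := (A₂ᶜ.orderIsoOfFin hc).apply_symm_apply x
          calc A₂ᶜ.orderEmbOfFin hc j = ↑(A₂ᶜ.orderIsoOfFin hc j) :=
                (Finset.coe_orderIsoOfFin_apply A₂ᶜ hc j).symm
            _ = i := by rw [hj, this]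
        simp only [this]
  calc S.card ≤ _ := Finset.card_le_card hsub
    _ ≤ ((Finset.univ.powersetCard ℓ) ×ˢ (Finset.univ.powersetCard ℓ) ×ˢ
        (Finset.univ : Finset (Fin (m - ℓ) → Fin k))).card := Finset.card_image_le
    _ = m.choose ℓ * (m.choose ℓ * k ^ (m - ℓ)) := by
        rw [Finset.card_product, Finset.card_product, Finset.card_powersetCard,
          Finset.card_univ, Finset.card_univ, Fintype.card_fin, Fintype.card_fun,
          Fintype.card_fin, Fintype.card_fin]

/-- Greedy selection lemma. -/
lemma greedy_select {V : Type*} [DecidableEq V] (R : V → V → Prop)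
    (hsymm : ∀ u v, R u v → R v u) (hrefl : ∀ v, R v v) (B : ℕ)
    (hB : ∀ u, ∀ S : Finset V, (∀ v ∈ S, R u v) → S.card ≤ B) :
    ∀ S : Finset V, ∃ C : Finset V, C ⊆ S ∧ S.card ≤ B * C.card ∧
      ∀ u ∈ C, ∀ v ∈ C, u ≠ v → ¬ R u v := by
  classical
  intro S
  induction S using Finset.strongInduction with
  | _ S ih =>
    rcases S.eq_empty_or_nonempty with rfl | ⟨u, hu⟩
    · exact ⟨∅, Finset.Subset.refl _, by simp, by simp⟩
    · set S' := S.filter (fun v => ¬ R u v) with hS'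
      have huS' : u ∉ S' := by simp [hS', hrefl u]
      have hsub : S' ⊆ S := Finset.filter_subset _ _
      have hss : S' ⊂ S := Finset.ssubset_iff_of_subset hsub |>.2 ⟨u, hu, huS'⟩
      obtain ⟨C', hC'sub, hC'card, hC'good⟩ := ih S' hss
      refine ⟨insert u C', ?_, ?_, ?_⟩
      · exact Finset.insert_subset hu (hC'sub.trans hsub)
      · have huC' : u ∉ C' := fun h => huS' (hC'sub h)
        rw [Finset.card_insert_of_notMem huC']
        have hsplit : (S.filter (fun v => ¬ R u v)).card
            + (S.filter (fun v => R u v)).card = S.card := by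
          rw [add_comm]
          exact Finset.card_filter_add_card_filter_not (fun v => R u v)
        have hball : (S.filter (fun v => R u v)).card ≤ B :=
          hB u _ (fun v hv => (Finset.mem_filter.1 hv).2)
        calc S.card = S'.card + (S.filter (fun v => R u v)).card := hsplit.symm
          _ ≤ B * C'.card + B := Nat.add_le_add hC'card hball
          _ = B * (C'.card + 1) := by ring
      · intro a ha b hb hab
        rcases Finset.mem_insert.1 ha with rfl | ha' <;>
          rcases Finset.mem_insert.1 hb with rfl | hb'
        · exact absurd rfl hab
        · exact fun h => (Finset.mem_filter.1 (hC'sub hb')).2 h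
        · exact fun h => (Finset.mem_filter.1 (hC'sub ha')).2 (hsymm _ _ h)
        · exact hC'good a ha' b hb' hab

/-- Let `k ≥ 2` and `1 ≤ ℓ ≤ m`. Then there exists a code `C ⊆ [k]^m` with
`|C| ≥ k^m / (C(m,ℓ)² k^{m-ℓ})` such that every two distinct codewords of `C` have
longest common subsequence of length less than `ℓ` (no string of length `ℓ` is a common
subsequence of two distinct codewords). -/
theorem greedy_small_lcs_code (k ℓ m : ℕ) (hk : 2 ≤ k) (hℓ : 0 < ℓ) (hℓm : ℓ ≤ m) :
    ∃ C : Finset (Fin m → Fin k),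
      (k : ℝ) ^ m / ((m.choose ℓ : ℝ) ^ 2 * (k : ℝ) ^ (m - ℓ)) ≤ C.card ∧
      ∀ u ∈ C, ∀ v ∈ C, u ≠ v →
        ¬∃ s : Fin ℓ → Fin k, IsSubseq s u ∧ IsSubseq s v := by
  classical
  have hk0 : 0 < k := by omega
  set R : (Fin m → Fin k) → (Fin m → Fin k) → Prop :=
    fun u v => ∃ s : Fin ℓ → Fin k, IsSubseq s u ∧ IsSubseq s v with hR
  have hsymm : ∀ u v, R u v → R v u := fun u v ⟨s, h1, h2⟩ => ⟨s, h2, h1⟩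
  have hrefl : ∀ v, R v v := by
    intro v
    refine ⟨fun j => v (Fin.castLE hℓm j), ⟨Fin.castLE hℓm, ?_, fun j => rfl⟩,
      ⟨Fin.castLE hℓm, ?_, fun j => rfl⟩⟩ <;>
    exact fun a b hab => by simpa using hab
  set B : ℕ := m.choose ℓ * (m.choose ℓ * k ^ (m - ℓ)) with hB
  obtain ⟨C, -, hcard, hgood⟩ := greedy_select R hsymm hrefl B
    (fun u S hS => greedy_ball_bound k ℓ m hk0 u S hS) Finset.univ
  refine ⟨C, ?_, hgood⟩
  have hBpos : 0 < B := by
    have h1 : 0 < m.choose ℓ := Nat.choose_pos hℓm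
    have h2 : 0 < k ^ (m - ℓ) := pow_pos hk0 _
    positivity
  have hcard' : (k : ℝ) ^ m ≤ (B : ℝ) * C.card := by
    have : (Finset.univ : Finset (Fin m → Fin k)).card = k ^ m := by
      rw [Finset.card_univ, Fintype.card_fun, Fintype.card_fin, Fintype.card_fin]
    have h : k ^ m ≤ B * C.card := this ▸ hcard
    exact_mod_cast h
  have hBR : ((m.choose ℓ : ℝ) ^ 2 * (k : ℝ) ^ (m - ℓ)) = (B : ℝ) := by
    push_cast [hB]; ring
  rw [hBR, div_le_iff₀ (by exact_mod_cast hBpos)]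
  linarith [hcard']
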